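/- arXiv:2509.15404 — 2 statements merged into one kernel-verified Lean document; each statement's English description precedes it below -/
import Mathlib

section
/- With collision penalty r > 0 and prior λ = p₀(Go) ∈ (0,1), and utilities u(Go,DR) = -r, u(Stop,DR) = 1, u(Go,DC) = 0, u(Stop,DC) = -1, the minimum persuadable trust threshold (for persuading from default DR to DC using the fully revealing signal for Go) is θ* = (2(1-λ) - rλ) / ((1-λ)(r+2)). Precisely, for θ ∈ [0,1], the expected utility of DC is at least that of DR under the belief (1-θ)·(λ, 1-λ) + θ·(1, 0) if and only if θ ≥ θ*. -/
/-- in the AV-HV model with utilities u(Go,DR) = -r, u(Stop,DR) = 1,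
u(Go,DC) = 0, u(Stop,DC) = -1, for θ ∈ [0,1] the expected utility of DC is at least that
of DR under the belief (1-θ)·(λ, 1-λ) + θ·(1, 0) iff θ ≥ θ* = (2(1-λ) - rλ)/((1-λ)(r+2)). -/
theorem stmt_3 (lam r θ : ℝ) (hr : 0 < r) (hlam : lam ∈ Set.Ioo (0:ℝ) 1)
    (hθ : θ ∈ Set.Icc (0:ℝ) 1) :
    (((1 - θ) * lam + θ) * 0 + ((1 - θ) * (1 - lam)) * (-1) ≥
       ((1 - θ) * lam + θ) * (-r) + ((1 - θ) * (1 - lam)) * 1) ↔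
    θ ≥ (2 * (1 - lam) - r * lam) / ((1 - lam) * (r + 2)) := by
  obtain ⟨h0, h1⟩ := hlam
  have hd : 0 < (1 - lam) * (r + 2) := by nlinarith
  rw [ge_iff_le, ge_iff_le, div_le_iff₀ hd]
  constructor <;> intro h <;> nlinarith
end

section
/- If θ < θ* where θ* = (-ΔU₀)/(M - ΔU₀) with ΔU₀ := U(a₁|p₀) - U(a₂|p₀) < 0 and M := sup over posteriors q ∈ Δ(Ω) of (U(a₁|q) - U(a₂|q)) > 0, then for every posterior q ∈ Δ(Ω) the trust-aware belief (1-θ)p₀ + θq strictly prefers a₂: U(a₂ | (1-θ)p₀ + θq) > U(a₁ | (1-θ)p₀ + θq). -/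
/-- Expected utility of action `a` under belief `p`. -/
noncomputable def expUtil {Ω A : Type*} [Fintype Ω] (u : Ω → A → ℝ) (p : Ω → ℝ) (a : A) : ℝ :=
  ∑ ω, p ω * u ω a

lemma expUtil_mix {Ω A : Type*} [Fintype Ω] (u : Ω → A → ℝ) (p q : Ω → ℝ) (θ : ℝ) (a : A) :
    expUtil u (fun ω => (1 - θ) * p ω + θ * q ω) a
      = (1 - θ) * expUtil u p a + θ * expUtil u q a := by
  simp only [expUtil, Finset.mul_sum, ← Finset.sum_add_distrib]
  apply Finset.sum_congr rfl
  intro ω _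
  ring

/-- if `θ < θ* = (-ΔU₀)/(M - ΔU₀)` where `ΔU₀ = U(a₁|p₀) - U(a₂|p₀) < 0` and
`M = sup over posteriors q of (U(a₁|q) - U(a₂|q)) = max_ω (u(ω,a₁) - u(ω,a₂)) > 0`, then for
every posterior `q` the trust-aware belief `(1-θ)p₀ + θq` strictly prefers `a₂`. -/
theorem stmt_18 {Ω A : Type*} [Fintype Ω] [Nonempty Ω]
    (p₀ : Ω → ℝ) (hpos : ∀ ω, 0 < p₀ ω) (hsum : ∑ ω, p₀ ω = 1)
    (u : Ω → A → ℝ) (a₁ a₂ : A)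
    (ΔU₀ M : ℝ)
    (hΔU₀ : ΔU₀ = expUtil u p₀ a₁ - expUtil u p₀ a₂) (hΔU₀neg : ΔU₀ < 0)
    (hM : IsLUB {x : ℝ | ∃ q : Ω → ℝ, (∀ ω, 0 ≤ q ω) ∧ (∑ ω, q ω = 1) ∧
      x = expUtil u q a₁ - expUtil u q a₂} M)
    (hMpos : 0 < M)
    (θ : ℝ) (hθ : θ ∈ Set.Icc (0:ℝ) 1) (hlt : θ < (-ΔU₀) / (M - ΔU₀)) :
    ∀ q : Ω → ℝ, (∀ ω, 0 ≤ q ω) → (∑ ω, q ω = 1) →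
      expUtil u (fun ω => (1 - θ) * p₀ ω + θ * q ω) a₂ >
      expUtil u (fun ω => (1 - θ) * p₀ ω + θ * q ω) a₁ := by
  intro q hq hqs
  have hub : expUtil u q a₁ - expUtil u q a₂ ≤ M := hM.1 ⟨q, hq, hqs, rfl⟩
  have hθ0 : 0 ≤ θ := hθ.1
  have hden : 0 < M - ΔU₀ := by linarith
  have hkey : θ * (M - ΔU₀) < -ΔU₀ := (lt_div_iff₀ hden).mp hlt
  rw [expUtil_mix, expUtil_mix]
  nlinarith [mul_le_mul_of_nonneg_left hub hθ0]
end
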